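/- Let k ≥ 1 and let ℓ = ik + j(k+1) for some 0 ≤ i ≤ k, 0 ≤ j ≤ k−1. Then the number of nonnegative integers r such that (r, ℓ) is a square vector of the word w_k = (0^k 1^k)^{3k} (0^{k+1} 1^{k+1})^k is at least (k+1)/2. -/

import Mathlib

/-- `m`-fold repetition of the word `u`. -/
def repWord {α : Type*} (u : List α) (m : ℕ) : List α :=
  (List.replicate m u).flatten

/-- The word `w_k = (0^k 1^k)^{3k} (0^{k+1} 1^{k+1})^k` over the binary alphabet. -/
def wWord (k : ℕ) : List (Fin 2) :=
  repWord (List.replicate k 0 ++ List.replicate k 1) (3 * k) ++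
    repWord (List.replicate (k + 1) 0 ++ List.replicate (k + 1) 1) k

/-- `(r, ℓ)` is a square vector of a binary word `w` if `w` has a fragment `u ++ v` with
`|u| = |v|` such that each of `u` and `v` contains exactly `r` zeros and exactly `ℓ` ones. -/
def SquareVector (w : List (Fin 2)) (r ℓ : ℕ) : Prop :=
  ∃ x u v y : List (Fin 2), w = x ++ u ++ v ++ y ∧ u.length = v.length ∧
    u.count 0 = r ∧ u.count 1 = ℓ ∧ v.count 0 = r ∧ v.count 1 = ℓ

namespace SqAux

lemma repWord_zero {α : Type*} (u : List α) : repWord u 0 = [] := rfl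

lemma repWord_succ {α : Type*} (u : List α) (m : ℕ) :
    repWord u (m+1) = u ++ repWord u m := by
  simp [repWord, List.replicate_succ]

lemma repWord_add {α : Type*} (u : List α) (m n : ℕ) :
    repWord u (m+n) = repWord u m ++ repWord u n := by
  induction m with
  | zero => simp [repWord_zero]
  | succ m ih => rw [Nat.succ_add, repWord_succ, ih, repWord_succ, List.append_assoc]

lemma repWord_length {α : Type*} (u : List α) (m : ℕ) :
    (repWord u m).length = m * u.length := by
  induction m with
  | zero => simp [repWord_zero]
  | succ m ih => rw [repWord_succ]; simp [ih]; ring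

lemma repWord_count (u : List (Fin 2)) (c : Fin 2) (m : ℕ) :
    (repWord u m).count c = m * u.count c := by
  induction m with
  | zero => simp [repWord_zero]
  | succ m ih => rw [repWord_succ]; simp [ih]; ring

lemma count01 : ∀ l : List (Fin 2), l.count 0 + l.count 1 = l.length
  | [] => rfl
  | a :: l => by
      have := count01 l
      fin_cases a <;> simp [List.count_cons] <;> omega

def blkA (k : ℕ) : List (Fin 2) := List.replicate k 0 ++ List.replicate k 1
def blkB (k : ℕ) : List (Fin 2) := List.replicate (k+1) 0 ++ List.replicate (k+1) 1

lemma blkA_length (k : ℕ) : (blkA k).length = 2*k := by simp [blkA]; ring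
lemma blkB_length (k : ℕ) : (blkB k).length = 2*(k+1) := by simp [blkB]; ring

lemma wWord_eq (k : ℕ) : wWord k = repWord (blkA k) (3*k) ++ repWord (blkB k) k := rfl

lemma count1_blkA (k : ℕ) : (blkA k).count 1 = k := by
  simp [blkA, List.count_replicate]

lemma count1_blkB (k : ℕ) : (blkB k).count 1 = k+1 := by
  simp [blkB, List.count_replicate]

lemma take_blk (a s : ℕ) (hs : s ≤ 2*a) :
    ((List.replicate a (0:Fin 2) ++ List.replicate a 1).take s).count 1 = s - a := by
  rcases Nat.le_total s a with h | h
  · rw [List.take_append_of_le_length (by simpa using h)]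
    simp [List.take_replicate, List.count_replicate]
    omega
  · obtain ⟨c, rfl⟩ : ∃ c, s = a + c := ⟨s - a, by omega⟩
    rw [show a + c = (List.replicate a (0:Fin 2)).length + c by simp, List.take_append,
      List.count_append]
    simp [List.take_replicate, List.count_replicate]
    omega

lemma wWord_length (k : ℕ) : (wWord k).length = 6*(k*k) + 2*(k+1)*k := by
  rw [wWord_eq]
  simp [repWord_length, blkA_length, blkB_length]
  ring

lemma take_wWord_A (k q s : ℕ) (hq : q < 3*k) (hs : s ≤ 2*k) :
    (wWord k).take (2*k*q + s) = repWord (blkA k) q ++ (blkA k).take s := by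
  obtain ⟨q', hq'⟩ : ∃ q', 3*k = q + (q'+1) := ⟨3*k - q - 1, by omega⟩
  rw [wWord_eq, hq', repWord_add, repWord_succ, List.append_assoc,
    show 2*k*q + s = (repWord (blkA k) q).length + s by
      rw [repWord_length, blkA_length]; ring,
    List.take_length_add_append]
  congr 1
  rw [List.append_assoc]
  exact List.take_append_of_le_length (by rw [blkA_length]; omega)

lemma take_wWord_B (k Q S : ℕ) (hQ : Q < k) (hS : S ≤ 2*(k+1)) :
    (wWord k).take (6*(k*k) + (2*(k+1)*Q + S)) =
      (repWord (blkA k) (3*k) ++ repWord (blkB k) Q) ++ (blkB k).take S := by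
  obtain ⟨Q', hQ'⟩ : ∃ Q', k = Q + (Q'+1) := ⟨k - Q - 1, by omega⟩
  have hsplit : repWord (blkB k) k = repWord (blkB k) Q ++ (blkB k ++ repWord (blkB k) Q') := by
    nth_rewrite 2 [hQ']
    rw [repWord_add, repWord_succ]
  rw [wWord_eq, hsplit,
    show repWord (blkA k) (3*k) ++ (repWord (blkB k) Q ++ (blkB k ++ repWord (blkB k) Q')) =
      (repWord (blkA k) (3*k) ++ repWord (blkB k) Q) ++ (blkB k ++ repWord (blkB k) Q') by
        simp [List.append_assoc],
    show 6*(k*k) + (2*(k+1)*Q + S) =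
      (repWord (blkA k) (3*k) ++ repWord (blkB k) Q).length + S by
        simp [repWord_length, blkA_length, blkB_length]; ring,
    List.take_length_add_append]
  congr 1
  exact List.take_append_of_le_length (by rw [blkB_length]; omega)

lemma ones_A_low (k q s : ℕ) (hq : q < 3*k) (hs : s ≤ k) :
    ((wWord k).take (2*k*q + s)).count 1 = k*q := by
  rw [take_wWord_A k q s hq (by omega), List.count_append, repWord_count, count1_blkA]
  have : ((blkA k).take s).count 1 = s - k := take_blk k s (by omega)
  rw [this, show s - k = 0 by omega, Nat.add_zero, Nat.mul_comm]

lemma ones_A_high (k q c : ℕ) (hq : q < 3*k) (hc : c ≤ k) :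
    ((wWord k).take (2*k*q + (k + c))).count 1 = k*q + c := by
  rw [take_wWord_A k q (k+c) hq (by omega), List.count_append, repWord_count, count1_blkA]
  have : ((blkA k).take (k+c)).count 1 = (k+c) - k := take_blk k (k+c) (by omega)
  rw [this, show k + c - k = c by omega, Nat.mul_comm]

lemma ones_B_low (k Q S : ℕ) (hQ : Q < k) (hS : S ≤ k+1) :
    ((wWord k).take (6*(k*k) + (2*(k+1)*Q + S))).count 1 = 3*(k*k) + (k+1)*Q := by
  rw [take_wWord_B k Q S hQ (by omega), List.count_append, List.count_append,
    repWord_count, repWord_count, count1_blkA, count1_blkB]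
  have : ((blkB k).take S).count 1 = S - (k+1) := take_blk (k+1) S (by omega)
  rw [this, show S - (k+1) = 0 by omega, Nat.add_zero]
  ring

lemma build (w : List (Fin 2)) (p L r ℓ : ℕ) (hlen : p + (L + L) ≤ w.length)
    (h1 : (w.take (p+L)).count 1 = (w.take p).count 1 + ℓ)
    (h2 : (w.take (p+L+L)).count 1 = (w.take (p+L)).count 1 + ℓ)
    (hr : L = r + ℓ) : SquareVector w r ℓ := by
  set u := (w.drop p).take L with hu
  set v := (w.drop (p+L)).take L with hv
  have e1 : w.take (p+L) = w.take p ++ u := List.take_add ..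
  have e2 : w.take (p+L+L) = w.take (p+L) ++ v := List.take_add ..
  have hul : u.length = L := by
    rw [hu, List.length_take, List.length_drop]; omega
  have hvl : v.length = L := by
    rw [hv, List.length_take, List.length_drop]; omega
  have hu1 : u.count 1 = ℓ := by
    have := congrArg (List.count 1) e1
    rw [List.count_append] at this
    omega
  have hv1 : v.count 1 = ℓ := by
    have := congrArg (List.count 1) e2
    rw [List.count_append] at this
    omega
  have hu0 : u.count 0 = r := by have := count01 u; omega
  have hv0 : v.count 0 = r := by have := count01 v; omega
  refine ⟨w.take p, u, v, w.drop (p+L+L), ?_, by omega, hu0, hu1, hv0, hv1⟩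
  calc w = w.take (p+L+L) ++ w.drop (p+L+L) := (List.take_append_drop _ _).symm
    _ = ((w.take p ++ u) ++ v) ++ w.drop (p+L+L) := by rw [e2, e1]
    _ = w.take p ++ u ++ v ++ w.drop (p+L+L) := by simp [List.append_assoc]


lemma case0 (k t : ℕ) (hk : 1 ≤ k) (ht : 2*t ≤ k) : SquareVector (wWord k) t 0 := by
  apply build (wWord k) 0 t t 0
  · rw [wWord_length]
    have hkk : k*1 ≤ k*k := Nat.mul_le_mul_left k hk
    linarith
  · have e1 : ((wWord k).take (2*k*0 + t)).count 1 = k*0 := ones_A_low k 0 t (by omega) (by omega)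
    rw [show 2*k*0 + t = t by ring] at e1
    rw [show 0+t = t by ring, e1]
    simp
  · have e1 : ((wWord k).take (2*k*0 + t)).count 1 = k*0 := ones_A_low k 0 t (by omega) (by omega)
    have e2 : ((wWord k).take (2*k*0 + (t+t))).count 1 = k*0 := ones_A_low k 0 (t+t) (by omega) (by omega)
    rw [show 2*k*0 + t = t by ring] at e1
    rw [show 2*k*0 + (t+t) = 0+t+t by ring] at e2
    rw [e2, show 0+t = t by ring, e1]
    omega
  · omega

lemma caseI (k i j t r : ℕ) (hi1 : 1 ≤ i) (hi : i ≤ k) (hj : j + 1 ≤ k) (ht : 2*t ≤ k)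
    (H : ℕ) (hH1 : k ≤ j + 2*H) (hH2 : j + 2*H ≤ k + 1)
    (hr : r + t = (i*k + j*(k+1)) + H) :
    SquareVector (wWord k) r (i*k + j*(k+1)) := by
  obtain ⟨b, hb⟩ : ∃ b, i + b = k := ⟨k-i, by omega⟩
  obtain ⟨c, hc⟩ : ∃ c, j + 1 + c = k := ⟨k-j-1, by omega⟩
  obtain ⟨e, he⟩ : ∃ e, e + t = j + H := ⟨j+H-t, by omega⟩
  obtain ⟨ry, hry⟩ : ∃ ry, ry + 2*t = j + 2*H := ⟨j+2*H-2*t, by omega⟩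
  have hbz : (i:ℤ) + b = k := by exact_mod_cast hb
  have hcz : (j:ℤ) + 1 + c = k := by exact_mod_cast hc
  have hez : (e:ℤ) + t = j + H := by exact_mod_cast he
  have hryz : (ry:ℤ) + 2*t = j + 2*H := by exact_mod_cast hry
  have hrz : (r:ℤ) + t = (i*k + j*(k+1)) + H := by exact_mod_cast hr
  have he_le : e ≤ k := by omega
  have hP1 : (2*k*(2*b+c) + (k + (c+1))) + (2*(i+j)*k + j + e) = 2*k*(2*k+b) + e := by
    zify; linear_combination (2*(k:ℤ))*hbz + (2*(k:ℤ)+1)*hcz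
  have hP2 : (2*k*(2*b+c) + (k + (c+1))) + (2*(i+j)*k + j + e) + (2*(i+j)*k + j + e)
      = 6*(k*k) + (2*(k+1)*j + ry) := by
    zify; linear_combination (4*(k:ℤ))*hbz + (2*(k:ℤ)+1)*hcz + 2*hez - hryz
  have E0 : ((wWord k).take (2*k*(2*b+c) + (k + (c+1)))).count 1 = k*(2*b+c) + (c+1) :=
    ones_A_high k (2*b+c) (c+1) (by omega) (by omega)
  have E1 : ((wWord k).take ((2*k*(2*b+c) + (k + (c+1))) + (2*(i+j)*k + j + e))).count 1
      = k*(2*k+b) := by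
    rw [hP1]; exact ones_A_low k (2*k+b) e (by omega) he_le
  have E2 : ((wWord k).take ((2*k*(2*b+c) + (k + (c+1))) + (2*(i+j)*k + j + e)
      + (2*(i+j)*k + j + e))).count 1 = 3*(k*k) + (k+1)*j := by
    rw [hP2]; exact ones_B_low k j ry (by omega) (by omega)
  apply build (wWord k) (2*k*(2*b+c) + (k + (c+1))) (2*(i+j)*k + j + e) r
  · rw [wWord_length]
    have h2j : 2*(k+1)*(j+1) ≤ 2*(k+1)*k := Nat.mul_le_mul_left _ (by omega)
    have := hP2
    linarith
  · rw [E1, E0]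
    zify; linear_combination (-(k:ℤ))*hbz + (-(k:ℤ)-1)*hcz
  · rw [show (2*k*(2*b+c) + (k + (c+1))) + (2*(i+j)*k + j + e) + (2*(i+j)*k + j + e)
      = (2*k*(2*b+c) + (k + (c+1))) + (2*(i+j)*k + j + e) + (2*(i+j)*k + j + e) from rfl,
      E2, E1]
    zify; linear_combination (-(k:ℤ))*hbz
  · zify; linear_combination hez - hrz

lemma caseB1 (k j t r : ℕ) (hj1 : 1 ≤ j) (hj : 2*j + 1 ≤ k) (ht : 2*t ≤ k)
    (G : ℕ) (hG1 : k ≤ 2*G) (hG2 : 2*G ≤ k + 1)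
    (hr : r + t = j*(k+1) + G) :
    SquareVector (wWord k) r (j*(k+1)) := by
  obtain ⟨e, he⟩ : ∃ e, e + t = G := ⟨G - t, by omega⟩
  have hez : (e:ℤ) + t = G := by exact_mod_cast he
  have hrz : (r:ℤ) + t = j*(k+1) + G := by exact_mod_cast hr
  have hP1 : (6*(k*k) + (2*(k+1)*0 + t)) + (2*(j*(k+1)) + e) = 6*(k*k) + (2*(k+1)*j + G) := by
    zify; linear_combination hez
  have hP2 : (6*(k*k) + (2*(k+1)*0 + t)) + (2*(j*(k+1)) + e) + (2*(j*(k+1)) + e)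
      = 6*(k*k) + (2*(k+1)*(2*j) + (G+e)) := by
    zify; linear_combination hez
  have E0 : ((wWord k).take (6*(k*k) + (2*(k+1)*0 + t))).count 1 = 3*(k*k) + (k+1)*0 :=
    ones_B_low k 0 t (by omega) (by omega)
  have E1 : ((wWord k).take ((6*(k*k) + (2*(k+1)*0 + t)) + (2*(j*(k+1)) + e))).count 1
      = 3*(k*k) + (k+1)*j := by
    rw [hP1]; exact ones_B_low k j G (by omega) (by omega)
  have E2 : ((wWord k).take ((6*(k*k) + (2*(k+1)*0 + t)) + (2*(j*(k+1)) + e)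
      + (2*(j*(k+1)) + e))).count 1 = 3*(k*k) + (k+1)*(2*j) := by
    rw [hP2]
    exact ones_B_low k (2*j) (G+e) (by omega) (by omega)
  apply build (wWord k) (6*(k*k) + (2*(k+1)*0 + t)) (2*(j*(k+1)) + e) r
  · rw [wWord_length]
    have h2j : 2*(k+1)*(2*j+1) ≤ 2*(k+1)*k := Nat.mul_le_mul_left _ (by omega)
    have := hP2
    have hGe : G + e ≤ 2*(k+1) := by omega
    linarith
  · rw [E1, E0]; zify; ring
  · rw [E2, E1]; zify; ring
  · zify; linear_combination hez - hrz

lemma caseB2 (k j t r : ℕ) (hj : j + 1 ≤ k) (hjk : k ≤ 2*j) (ht : 2*t ≤ k)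
    (hr : r + t = j*(k+1) + (k - j)) :
    SquareVector (wWord k) r (j*(k+1)) := by
  obtain ⟨w1, hw1⟩ : ∃ w1, w1 + 1 + j = k := ⟨k-j-1, by omega⟩
  obtain ⟨L, hL⟩ : ∃ L, L + t = 2*(j*(k+1)) + (w1+1) := ⟨2*(j*(k+1)) + (w1+1) - t, by
    have : t ≤ w1 + 1 + j := by omega
    omega⟩
  obtain ⟨S1, hS1⟩ : ∃ S1, S1 + t = j + 1 := ⟨j+1-t, by omega⟩
  obtain ⟨S2, hS2⟩ : ∃ S2, S2 + 2*t = k + 1 := ⟨k+1-2*t, by omega⟩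
  obtain ⟨k1, hk1⟩ : ∃ k1, k1 + 1 = k := ⟨k-1, by omega⟩
  have hw1z : (w1:ℤ) + 1 + j = k := by exact_mod_cast hw1
  have hLz : (L:ℤ) + t = 2*(j*(k+1)) + (w1+1) := by exact_mod_cast hL
  have hS1z : (S1:ℤ) + t = j + 1 := by exact_mod_cast hS1
  have hS2z : (S2:ℤ) + 2*t = k + 1 := by exact_mod_cast hS2
  have hk1z : (k1:ℤ) + 1 = k := by exact_mod_cast hk1
  rw [show k - j = w1 + 1 by omega] at hr
  have hrz : (r:ℤ) + t = j*(k+1) + (w1+1) := by exact_mod_cast hr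
  have hP1 : (2*k*(2*(k+w1)) + (k + (2*w1+1))) + L = 6*(k*k) + (2*(k+1)*w1 + S1) := by
    zify; linear_combination hLz - hS1z + (2*(k:ℤ)+1)*hw1z
  have hP2 : (2*k*(2*(k+w1)) + (k + (2*w1+1))) + L + L = 6*(k*k) + (2*(k+1)*k1 + S2) := by
    zify; linear_combination 2*hLz - hS2z + (-2*(k:ℤ)-2)*hk1z + (4*(k:ℤ)+4)*hw1z
  have E0 : ((wWord k).take (2*k*(2*(k+w1)) + (k + (2*w1+1)))).count 1
      = k*(2*(k+w1)) + (2*w1+1) :=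
    ones_A_high k (2*(k+w1)) (2*w1+1) (by omega) (by omega)
  have E1 : ((wWord k).take ((2*k*(2*(k+w1)) + (k + (2*w1+1))) + L)).count 1
      = 3*(k*k) + (k+1)*w1 := by
    rw [hP1]; exact ones_B_low k w1 S1 (by omega) (by omega)
  have E2 : ((wWord k).take ((2*k*(2*(k+w1)) + (k + (2*w1+1))) + L + L)).count 1
      = 3*(k*k) + (k+1)*k1 := by
    rw [hP2]; exact ones_B_low k k1 S2 (by omega) (by omega)
  apply build (wWord k) (2*k*(2*(k+w1)) + (k + (2*w1+1))) L r
  · rw [wWord_length]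
    have hmul : 2*(k+1)*k1 + 2*(k+1) ≤ 2*(k+1)*k + 2*(k+1) := by
      have := Nat.mul_le_mul_left (2*(k+1)) (show k1 ≤ k by omega)
      omega
    have := hP2
    linarith
  · rw [E1, E0]
    zify; linear_combination (-(k:ℤ)-1)*hw1z
  · rw [E2, E1]
    zify; linear_combination ((k:ℤ)+1)*hk1z + (-(k:ℤ)-1)*hw1z
  · zify; linear_combination hLz - hrz

end SqAux

open SqAux in
/-- Let `k ≥ 1` and `ℓ = ik + j(k+1)` with `0 ≤ i ≤ k`, `0 ≤ j ≤ k−1`.  Then the number of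
nonnegative integers `r` such that `(r, ℓ)` is a square vector of `w_k` is at least `(k+1)/2`. -/
theorem squareVectors_of_balanced (k i j : ℕ) (hk : 1 ≤ k) (hi : i ≤ k) (hj : j ≤ k - 1) :
    ((k : ℝ) + 1) / 2 ≤
      ({r : ℕ | SquareVector (wWord k) r (i * k + j * (k + 1))}.ncard : ℝ) := by
  have hj' : j + 1 ≤ k := by omega
  set T := k/2 with hT
  have key : ∃ C, T ≤ C ∧ ∀ t, t ≤ T → SquareVector (wWord k) (C - t) (i*k + j*(k+1)) := by
    rcases Nat.eq_zero_or_pos i with hi0 | hi1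
    · subst hi0
      rcases Nat.eq_zero_or_pos j with hj0 | hj1
      · subst hj0
        refine ⟨T, le_refl _, fun t ht => ?_⟩
        rw [show 0*k + 0*(k+1) = 0 by ring]
        exact case0 k (T - t) hk (by omega)
      · by_cases hsm : 2*j + 1 ≤ k
        · have hTC : T ≤ j*(k+1) + (k+1)/2 :=
            le_trans (by omega : T ≤ (k+1)/2) (Nat.le_add_left _ _)
          refine ⟨j*(k+1) + (k+1)/2, hTC, fun t ht => ?_⟩
          rw [show 0*k + j*(k+1) = j*(k+1) by ring]
          exact caseB1 k j t _ hj1 hsm (by omega) ((k+1)/2) (by omega) (by omega)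
            (Nat.sub_add_cancel (le_trans ht hTC))
        · have hTC : T ≤ j*(k+1) + (k-j) := by
            refine le_trans (by omega : T ≤ j) (le_trans ?_ (Nat.le_add_right _ _))
            exact Nat.le_mul_of_pos_right j (by omega)
          refine ⟨j*(k+1) + (k-j), hTC, fun t ht => ?_⟩
          rw [show 0*k + j*(k+1) = j*(k+1) by ring]
          exact caseB2 k j t _ hj' (by omega) (by omega)
            (Nat.sub_add_cancel (le_trans ht hTC))
    · have hTC : T ≤ i*k + j*(k+1) + (k+1-j)/2 := by
        refine le_trans (by omega : T ≤ k) (le_trans (Nat.le_mul_of_pos_left k hi1) ?_)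
        exact le_trans (Nat.le_add_right _ (j*(k+1))) (Nat.le_add_right _ _)
      refine ⟨i*k + j*(k+1) + (k+1-j)/2, hTC, fun t ht => ?_⟩
      exact caseI k i j t _ hi1 hi hj' (by omega) ((k+1-j)/2) (by omega) (by omega)
        (Nat.sub_add_cancel (le_trans ht hTC))
  obtain ⟨C, hTC, hmem⟩ := key
  set S := {r : ℕ | SquareVector (wWord k) r (i*k + j*(k+1))} with hS
  have hfin : S.Finite := by
    apply Set.Finite.subset (Set.finite_Iic ((wWord k).length))
    rintro r ⟨x, u, v, y, hw, _, hu0, -, -, -⟩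
    simp only [Set.mem_Iic]
    calc r = u.count 0 := hu0.symm
      _ ≤ u.length := List.count_le_length ..
      _ ≤ (wWord k).length := by rw [hw]; simp; omega
  have himg : ↑((Finset.range (T+1)).image (fun t => C - t)) ⊆ S := by
    intro r hr
    simp only [Finset.coe_image, Finset.coe_range, Set.mem_image, Set.mem_Iio] at hr
    obtain ⟨t, ht, rfl⟩ := hr
    exact hmem t (by omega)
  have hcard : ((Finset.range (T+1)).image (fun t => C - t)).card = T+1 := by
    rw [Finset.card_image_of_injOn, Finset.card_range]
    intro a ha b hb hab
    simp only [Finset.mem_coe, Finset.mem_range] at ha hb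
    simp only at hab
    omega
  have hle : T + 1 ≤ S.ncard := by
    have := Set.ncard_le_ncard himg hfin
    rwa [Set.ncard_coe_finset, hcard] at this
  have hcast : ((T:ℝ) + 1) ≤ (S.ncard : ℝ) := by exact_mod_cast hle
  rw [div_le_iff₀ (by norm_num : (0:ℝ) < 2)]
  have h2 : (k:ℝ) + 1 ≤ 2*((T:ℝ)+1) := by
    have : k + 1 ≤ 2*(T+1) := by omega
    exact_mod_cast this
  nlinarith [hcast, h2]
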